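/- Let 1 ≤ q < ∞ and ε' > 0. There exists a constant C(ε', q) > 0 such that for every N-dimensional subspace X_N of L_q(Ω) consisting of continuous functions which satisfies ε_k(X_N^q, L_∞) ≤ B·(N/k)^{1/q} for all 1 ≤ k ≤ N (with B ≥ 1), one has H_ε(X_N^q, L_∞) ≤ C(ε', q)·N·(B/ε)^q for every ε ≥ ε'. -/

import Mathlib

open MeasureTheory

noncomputable def supDist {Ω E : Type*} [NormedAddCommGroup E] (f g : Ω → E) : ℝ :=
  ⨆ x, ‖f x - g x‖

/-- Covering number: the minimal number of balls of radius `ε` (w.r.t. the distance `dst`)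
with centers in `A` needed to cover `A`. -/
noncomputable def coveringNum {α : Type*} (dst : α → α → ℝ) (ε : ℝ) (A : Set α) : ℕ :=
  sInf {n : ℕ | ∃ T : Finset α, ↑T ⊆ A ∧ T.card = n ∧ ∀ f ∈ A, ∃ g ∈ T, dst f g ≤ ε}

/-- The ε-entropy `H_ε(A) = log₂ N_ε(A)`. -/
noncomputable def metricEntropy {α : Type*} (dst : α → α → ℝ) (ε : ℝ) (A : Set α) : ℝ :=
  Real.logb 2 (coveringNum dst ε A)

/-- The entropy numbers `ε_k(A) = inf {ε > 0 : H_ε(A) ≤ k}`. -/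
noncomputable def entropyNum {α : Type*} (dst : α → α → ℝ) (k : ℕ) (A : Set α) : ℝ :=
  sInf {ε : ℝ | 0 < ε ∧ metricEntropy dst ε A ≤ k}
/-- The `L_q` norm `(∫_Ω ‖f‖^q dμ)^{1/q}`. -/
noncomputable def LqNorm {Ω : Type*} [MeasurableSpace Ω] {E : Type*} [NormedAddCommGroup E]
    (μ : MeasureTheory.Measure Ω) (q : ℝ) (f : Ω → E) : ℝ :=
  (∫ x, ‖f x‖ ^ q ∂μ) ^ (1 / q)
/-- `X_N^q`, the `L_q` unit ball of the subspace `V`. -/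
noncomputable def unitBallLq {Ω : Type*} [MeasurableSpace Ω] (μ : MeasureTheory.Measure Ω)
    (q : ℝ) (V : Submodule ℝ (Ω → ℝ)) : Set (Ω → ℝ) :=
  {f | f ∈ V ∧ LqNorm μ q f ≤ 1}

section AuxHelpers

open Metric Module
open scoped ENNReal

/-- Volumetric bound: a finite-dimensional normed space admits an `r`-net of the closed ball
of radius `R` with at most `(1 + 2R/r)^dim` points. -/
theorem exists_net (F : Type*) [NormedAddCommGroup F] [NormedSpace ℝ F]
    [FiniteDimensional ℝ F] {R r : ℝ} (hR : 0 < R) (hr : 0 < r) :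
    ∃ T : Finset F, (T.card : ℝ) ≤ (1 + 2 * R / r) ^ (Module.finrank ℝ F) ∧
      ∀ x ∈ closedBall (0 : F) R, ∃ y ∈ T, dist x y ≤ r := by
  classical
  have hbase : (1 : ℝ) ≤ 1 + 2 * R / r := by
    have : 0 ≤ 2 * R / r := by positivity
    linarith
  rcases subsingleton_or_nontrivial F with hs | hnt
  · refine ⟨{0}, ?_, ?_⟩
    · simpa using one_le_pow₀ hbase
    · intro x hx
      exact ⟨0, Finset.mem_singleton_self 0, by simp [Subsingleton.elim x 0, hr.le]⟩
  letI : MeasurableSpace F := borel F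
  haveI : BorelSpace F := ⟨rfl⟩
  set n := Module.finrank ℝ F with hn
  let b := Module.finBasis ℝ F
  set μ : Measure F := b.addHaar with hμ
  have hc0 : μ (ball (0 : F) 1) ≠ 0 := (measure_ball_pos μ 0 one_pos).ne'
  have hctop : μ (ball (0 : F) 1) ≠ ⊤ := measure_ball_lt_top.ne
  have hsepbound : ∀ P : Finset F, ↑P ⊆ closedBall (0 : F) R →
      (∀ p ∈ P, ∀ p' ∈ P, p ≠ p' → r < dist p p') → (P.card : ℝ) ≤ (1 + 2 * R / r) ^ n := by
    intro P hPsub hPsep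
    have hdisj : (↑P : Set F).PairwiseDisjoint (fun p => ball p (r / 2)) := by
      intro p hp p' hp' hne
      apply ball_disjoint_ball
      have := hPsep p hp p' hp' hne
      linarith [this]
    have hmeas : μ (⋃ p ∈ P, ball p (r / 2)) = ∑ p ∈ P, μ (ball p (r / 2)) :=
      measure_biUnion_finset hdisj (fun p _ => measurableSet_ball)
    have hsub : (⋃ p ∈ P, ball p (r / 2)) ⊆ ball (0 : F) (R + r / 2) := by
      intro y hy
      simp only [Set.mem_iUnion] at hy
      obtain ⟨p, hp, hyp⟩ := hy
      have hp' : dist p 0 ≤ R := by simpa using hPsub hp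
      have : dist y 0 ≤ dist y p + dist p 0 := dist_triangle _ _ _
      simp only [mem_ball] at hyp ⊢
      linarith
    have hball : ∀ p : F, μ (ball p (r / 2)) = ENNReal.ofReal ((r / 2) ^ n) * μ (ball 0 1) :=
      fun p => Measure.addHaar_ball μ p (by positivity)
    have hball0 : μ (ball (0 : F) (R + r / 2))
        = ENNReal.ofReal ((R + r / 2) ^ n) * μ (ball 0 1) :=
      Measure.addHaar_ball μ 0 (by positivity)
    have hsum : ((P.card : ℝ≥0∞) * ENNReal.ofReal ((r / 2) ^ n)) * μ (ball 0 1)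
        ≤ ENNReal.ofReal ((R + r / 2) ^ n) * μ (ball 0 1) := by
      calc ((P.card : ℝ≥0∞) * ENNReal.ofReal ((r / 2) ^ n)) * μ (ball 0 1)
          = ∑ p ∈ P, μ (ball p (r / 2)) := by
            rw [Finset.sum_congr rfl (fun p _ => hball p), Finset.sum_const, nsmul_eq_mul,
              mul_assoc]
        _ = μ (⋃ p ∈ P, ball p (r / 2)) := hmeas.symm
        _ ≤ μ (ball (0 : F) (R + r / 2)) := measure_mono hsub
        _ = _ := hball0
    have hsum2 : (P.card : ℝ≥0∞) * ENNReal.ofReal ((r / 2) ^ n)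
        ≤ ENNReal.ofReal ((R + r / 2) ^ n) :=
      (ENNReal.mul_le_mul_iff_left hc0 hctop).mp hsum
    have hreal : (P.card : ℝ) * (r / 2) ^ n ≤ (R + r / 2) ^ n := by
      have h1 : ENNReal.ofReal ((P.card : ℝ) * (r / 2) ^ n)
          ≤ ENNReal.ofReal ((R + r / 2) ^ n) := by
        rw [ENNReal.ofReal_mul (by positivity)]
        simpa [ENNReal.ofReal_natCast] using hsum2
      exact (ENNReal.ofReal_le_ofReal_iff (by positivity)).mp h1
    have hr2 : (0 : ℝ) < (r / 2) ^ n := by positivity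
    rw [← le_div_iff₀ hr2] at hreal
    have hEq : (R + r / 2) ^ n / (r / 2) ^ n = (1 + 2 * R / r) ^ n := by
      rw [← div_pow]
      congr 1
      field_simp
      ring
    rw [hEq] at hreal
    exact hreal
  set S : Set ℕ := {m : ℕ | ∃ P : Finset F, ↑P ⊆ closedBall (0 : F) R ∧
      (∀ p ∈ P, ∀ p' ∈ P, p ≠ p' → r < dist p p') ∧ P.card = m} with hS
  have hS0 : 0 ∈ S := ⟨∅, by simp, by simp, rfl⟩
  have hSbdd : BddAbove S := by
    refine ⟨Nat.floor ((1 + 2 * R / r) ^ n), ?_⟩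
    rintro m ⟨P, hsub, hsep, rfl⟩
    exact Nat.le_floor (hsepbound P hsub hsep)
  obtain ⟨P, hPsub, hPsep, hPcard⟩ := Nat.sSup_mem ⟨0, hS0⟩ hSbdd
  refine ⟨P, ?_, ?_⟩
  · exact hsepbound P hPsub hPsep
  · intro x hx
    by_contra hcon
    push_neg at hcon
    have hfar : ∀ p ∈ P, r < dist x p := fun p hp => (hcon p hp)
    have hxP : x ∉ P := by
      intro hxP
      have := hfar x hxP
      simp only [dist_self] at this
      linarith
    have hnew : P.card + 1 ∈ S := by
      refine ⟨insert x P, ?_, ?_, by rw [Finset.card_insert_of_notMem hxP]⟩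
      · intro y hy
        simp only [Finset.coe_insert, Set.mem_insert_iff] at hy
        rcases hy with rfl | hy
        · exact hx
        · exact hPsub hy
      · intro p hp p' hp' hne
        simp only [Finset.mem_insert] at hp hp'
        rcases hp with rfl | hp <;> rcases hp' with rfl | hp'
        · exact absurd rfl hne
        · exact hfar p' hp'
        · rw [dist_comm]; exact hfar p hp
        · exact hPsep p hp p' hp' hne
    have := le_csSup hSbdd hnew
    rw [hPcard] at this
    omega

lemma covNum_le_of_cover {α : Type*} (dst : α → α → ℝ) {ε : ℝ} {A : Set α} (T : Finset α)
    (hsub : ↑T ⊆ A) (hcov : ∀ f ∈ A, ∃ g ∈ T, dst f g ≤ ε) : coveringNum dst ε A ≤ T.card :=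
  Nat.sInf_le ⟨T, hsub, rfl, hcov⟩

lemma metricEntropy_le_logb {α : Type*} (dst : α → α → ℝ) {ε y : ℝ} {A : Set α} (hy : 1 ≤ y)
    (h : (coveringNum dst ε A : ℝ) ≤ y) : metricEntropy dst ε A ≤ Real.logb 2 y := by
  rcases Nat.eq_zero_or_pos (coveringNum dst ε A) with h0 | hpos
  · rw [metricEntropy, h0]
    simpa using Real.logb_nonneg one_lt_two hy
  · exact Real.logb_le_logb_of_le one_lt_two (by exact_mod_cast hpos) h

lemma aux_sqrt_le {t c : ℝ} (ht : 0 ≤ t) (hc : 0 ≤ c) (h : t ≤ c * Real.sqrt t) : t ≤ c ^ 2 := by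
  nlinarith [Real.sq_sqrt ht, Real.sqrt_nonneg t, sq_nonneg (c - Real.sqrt t)]

section SupDistX

variable {X : Type*} [TopologicalSpace X]

lemma bddAbove_range_comp [CompactSpace X] {f : X → ℝ} (hf : Continuous f) :
    BddAbove (Set.range f) :=
  (isCompact_range hf).bddAbove

lemma le_supDist [CompactSpace X] [Nonempty X] {f g : X → ℝ}
    (hf : Continuous f) (hg : Continuous g) (x : X) :
    ‖f x - g x‖ ≤ supDist f g :=
  le_ciSup (bddAbove_range_comp ((hf.sub hg).norm)) x

lemma supDist_le [Nonempty X] {f g : X → ℝ} {c : ℝ} (h : ∀ x, ‖f x - g x‖ ≤ c) :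
    supDist f g ≤ c :=
  ciSup_le h

lemma supDist_comm {f g : X → ℝ} : supDist f g = supDist g f := by
  unfold supDist
  simp_rw [norm_sub_rev]

lemma supDist_triangle [CompactSpace X] [Nonempty X] {f g h : X → ℝ}
    (hf : Continuous f) (hg : Continuous g) (hh : Continuous h) :
    supDist f h ≤ supDist f g + supDist g h := by
  apply supDist_le
  intro x
  calc ‖f x - h x‖ = ‖(f x - g x) + (g x - h x)‖ := by ring_nf
    _ ≤ ‖f x - g x‖ + ‖g x - h x‖ := norm_add_le _ _
    _ ≤ supDist f g + supDist g h := add_le_add (le_supDist hf hg x) (le_supDist hg hh x)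

lemma supDist_coe (F G : BoundedContinuousFunction X ℝ) : supDist ⇑F ⇑G = dist F G := by
  rw [BoundedContinuousFunction.dist_eq_iSup]
  unfold supDist
  simp_rw [Real.dist_eq, Real.norm_eq_abs]

end SupDistX

section Lq

variable {X : Type*} [MeasurableSpace X] (μ : Measure X) {q : ℝ}

lemma LqNorm_nonneg (f : X → ℝ) : 0 ≤ LqNorm μ q f :=
  Real.rpow_nonneg (integral_nonneg fun x => Real.rpow_nonneg (norm_nonneg _) q) _

lemma LqNorm_smul (hq0 : 0 < q) (c : ℝ) (f : X → ℝ) :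
    LqNorm μ q (c • f) = |c| * LqNorm μ q f := by
  unfold LqNorm
  have h1 : ∀ x, ‖(c • f) x‖ ^ q = ‖c‖ ^ q * ‖f x‖ ^ q := by
    intro x
    rw [Pi.smul_apply, smul_eq_mul, norm_mul, Real.mul_rpow (norm_nonneg _) (norm_nonneg _)]
  simp only [h1]
  rw [integral_const_mul, Real.mul_rpow (Real.rpow_nonneg (norm_nonneg _) _)
      (integral_nonneg fun x => Real.rpow_nonneg (norm_nonneg _) _),
    ← Real.rpow_mul (norm_nonneg c), mul_one_div_cancel hq0.ne', Real.rpow_one,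
    Real.norm_eq_abs]

lemma LqNorm_zero (hq0 : 0 < q) : LqNorm μ q (0 : X → ℝ) = 0 := by
  have := LqNorm_smul μ hq0 0 (0 : X → ℝ)
  simpa using this

end Lq

end AuxHelpers
section FinDim

open Metric Module

/-- If all functions in a subspace of continuous functions on a compact probability space
satisfy `|f x| ≤ Rb ‖f‖_q` pointwise, then the subspace is finite-dimensional. -/
theorem findim_of_pointwise_bound {X : Type*} [TopologicalSpace X] [CompactSpace X] [Nonempty X]
    [MeasurableSpace X] [OpensMeasurableSpace X] [T2Space X]
    (μ : Measure X) [IsProbabilityMeasure μ] {q : ℝ} (hq : 1 ≤ q)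
    (V : Submodule ℝ (X → ℝ)) (hcont : ∀ f ∈ V, Continuous f)
    {Rb : ℝ} (hRb : 1 ≤ Rb) (hbd : ∀ f ∈ V, ∀ x, |f x| ≤ Rb * LqNorm μ q f) :
    FiniteDimensional ℝ ↥V := by
  classical
  by_contra hinf
  have hq0 : (0:ℝ) < q := by linarith
  have hRb0 : (0:ℝ) < Rb := by linarith
  have hIntC : ∀ h : X → ℝ, Continuous h → Integrable h μ := fun h hh =>
    hh.integrable_of_hasCompactSupport (HasCompactSupport.of_compactSpace h)
  set C0 : ℝ := Rb ^ q with hC0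
  have hC0' : (1:ℝ) ≤ C0 := Real.one_le_rpow hRb hq0.le
  have hC00 : (0:ℝ) < C0 := by linarith
  -- key analytic bound
  have hkey : ∀ f ∈ V, ∀ x : X, |f x| ≤ C0 * Real.sqrt (∫ y, (f y) ^ 2 ∂μ) := by
    intro f hfV x
    have hfc := hcont f hfV
    have hbdd : BddAbove (Set.range fun y => |f y|) := bddAbove_range_comp hfc.abs
    set S : ℝ := ⨆ y, |f y| with hSdef
    have hxS : ∀ y, |f y| ≤ S := fun y => le_ciSup hbdd y
    have hS0 : 0 ≤ S := le_trans (abs_nonneg _) (hxS x)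
    set I1 : ℝ := ∫ y, |f y| ∂μ with hI1def
    set I2 : ℝ := ∫ y, (f y) ^ 2 ∂μ with hI2def
    have hI10 : 0 ≤ I1 := integral_nonneg fun y => abs_nonneg _
    have hI20 : 0 ≤ I2 := integral_nonneg fun y => sq_nonneg _
    have hint1 : Integrable (fun y => |f y|) μ := hIntC _ hfc.abs
    have hint2 : Integrable (fun y => (f y) ^ 2) μ := hIntC _ (hfc.pow 2)
    have hintq : Integrable (fun y => |f y| ^ q) μ :=
      hIntC _ (hfc.abs.rpow_const fun y => Or.inr hq0.le)
    have hD : I1 ≤ Real.sqrt I2 := by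
      have hnn : 0 ≤ ∫ y, (|f y| - I1) ^ 2 ∂μ := integral_nonneg fun y => sq_nonneg _
      have hcalc : ∫ y, (|f y| - I1) ^ 2 ∂μ = I2 - I1 ^ 2 := by
        have hexp : ∀ y, (|f y| - I1) ^ 2 = ((f y) ^ 2 - 2 * I1 * |f y|) + I1 ^ 2 := by
          intro y
          rw [sub_sq, sq_abs]
          ring
        have hintsub : Integrable (fun y => (f y) ^ 2 - 2 * I1 * |f y|) μ := by
          exact hint2.sub (hint1.const_mul _)
        have h5 : (∫ y, (|f y| - I1) ^ 2 ∂μ)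
            = (∫ y, ((f y) ^ 2 - 2 * I1 * |f y|) ∂μ) + ∫ _, I1 ^ 2 ∂μ := by
          rw [← integral_add hintsub (integrable_const _)]
          congr 1
          funext y
          rw [sub_sq, sq_abs]
          ring
        rw [h5, integral_sub hint2 (hint1.const_mul _), integral_const_mul, integral_const]

        simp only [probReal_univ, measure_univ, ENNReal.toReal_one, smul_eq_mul, one_mul]
        ring
      have h12 : I1 ^ 2 ≤ I2 := by rw [hcalc] at hnn; linarith
      calc I1 = Real.sqrt (I1 ^ 2) := (Real.sqrt_sq hI10).symm
        _ ≤ Real.sqrt I2 := Real.sqrt_le_sqrt h12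
    have hSC : S ≤ C0 * I1 := by
      rcases eq_or_lt_of_le hS0 with hS0' | hSpos
      · rw [← hS0']
        positivity
      · have hSL : S ≤ Rb * LqNorm μ q f := ciSup_le fun y => hbd f hfV y
        have hIq : (∫ y, |f y| ^ q ∂μ) ≤ S ^ (q - 1) * I1 := by
          have hmono : ∀ y, |f y| ^ q ≤ S ^ (q - 1) * |f y| := by
            intro y
            rcases eq_or_lt_of_le (abs_nonneg (f y)) with h0 | hpos
            · rw [← h0, Real.zero_rpow hq0.ne']
              positivity
            · have h1 : |f y| ^ q = |f y| ^ (q - 1) * |f y| := by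
                have h2 := Real.rpow_add hpos (q - 1) 1
                rw [sub_add_cancel] at h2
                rw [h2, Real.rpow_one]
              rw [h1]
              exact mul_le_mul_of_nonneg_right
                (Real.rpow_le_rpow (abs_nonneg _) (hxS y) (by linarith)) (abs_nonneg _)
          calc (∫ y, |f y| ^ q ∂μ) ≤ ∫ y, S ^ (q - 1) * |f y| ∂μ :=
                integral_mono hintq (hint1.const_mul _) hmono
            _ = S ^ (q - 1) * I1 := integral_const_mul _ _
        have hLq : LqNorm μ q f ≤ (S ^ (q - 1) * I1) ^ (1 / q) := by
          unfold LqNorm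
          apply Real.rpow_le_rpow
            (integral_nonneg fun y => Real.rpow_nonneg (norm_nonneg _) _) ?_ (by positivity)
          simpa [Real.norm_eq_abs] using hIq
        have hSR : S ≤ Rb * (S ^ (q - 1) * I1) ^ (1 / q) :=
          le_trans hSL (mul_le_mul_of_nonneg_left hLq (by linarith))
        have hq' : S ^ q ≤ Rb ^ q * (S ^ (q - 1) * I1) := by
          have h2 : S ^ q ≤ (Rb * (S ^ (q - 1) * I1) ^ (1 / q)) ^ q :=
            Real.rpow_le_rpow hS0 hSR hq0.le
          rwa [Real.mul_rpow hRb0.le (Real.rpow_nonneg (by positivity) _),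
            ← Real.rpow_mul (by positivity), one_div_mul_cancel hq0.ne', Real.rpow_one] at h2
        have hSq : S ^ q = S ^ (q - 1) * S := by
          have h2 := Real.rpow_add hSpos (q - 1) 1
          rw [sub_add_cancel] at h2
          rw [h2, Real.rpow_one]
        rw [hSq] at hq'
        have hSq1 : 0 < S ^ (q - 1) := Real.rpow_pos_of_pos hSpos _
        have h3 : S ^ (q - 1) * S ≤ S ^ (q - 1) * (Rb ^ q * I1) := by
          calc S ^ (q - 1) * S ≤ Rb ^ q * (S ^ (q - 1) * I1) := hq'
            _ = S ^ (q - 1) * (Rb ^ q * I1) := by ring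
        exact le_of_mul_le_mul_left h3 hSq1
    calc |f x| ≤ S := hxS x
      _ ≤ C0 * I1 := hSC
      _ ≤ C0 * Real.sqrt I2 := mul_le_mul_of_nonneg_left hD (by linarith)
  -- choose M
  set M : ℕ := Nat.floor (C0 ^ 2) + 1 with hM
  -- linearly independent family of M elements of V
  have hex : ∃ u : Fin M → (X → ℝ), (∀ i, u i ∈ V) ∧ LinearIndependent ℝ u := by
    let b := Basis.ofVectorSpace ℝ ↥V
    haveI : Infinite (Basis.ofVectorSpaceIndex ℝ ↥V) := by
      rw [← not_finite_iff_infinite]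
      intro hfin
      exact hinf (Module.Finite.of_basis b)
    obtain ⟨s, hscard⟩ := Infinite.exists_subset_card_eq (Basis.ofVectorSpaceIndex ℝ ↥V) M
    let e : Fin M ≃ ↥s := (Fintype.equivFinOfCardEq (by rw [Fintype.card_coe, hscard])).symm
    refine ⟨fun i => ((b ↑(e i) : ↥V) : X → ℝ), fun i => (b ↑(e i)).2, ?_⟩
    have h1 : LinearIndependent ℝ (fun i : Fin M => b ↑(e i)) :=
      b.linearIndependent.comp (fun i => ↑(e i))
        (Subtype.val_injective.comp e.injective)
    exact h1.map' V.subtype V.ker_subtype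
  obtain ⟨u, huV, huli⟩ := hex
  set V₀ : Submodule ℝ (X → ℝ) := Submodule.span ℝ (Set.range u) with hV₀
  have hV₀V : V₀ ≤ V := Submodule.span_le.mpr (by rintro _ ⟨i, rfl⟩; exact huV i)
  haveI hfd0 : FiniteDimensional ℝ ↥V₀ := FiniteDimensional.span_of_finite ℝ (Set.finite_range u)
  have hrank : Module.finrank ℝ ↥V₀ = M := by
    rw [finrank_span_eq_card huli, Fintype.card_fin]
  have hcont0 : ∀ f : ↥V₀, Continuous ((f : X → ℝ)) := fun f => hcont _ (hV₀V f.2)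
  -- inner product space structure
  let core : InnerProductSpace.Core ℝ ↥V₀ :=
    { inner := fun f g => ∫ y, (f : X → ℝ) y * (g : X → ℝ) y ∂μ
      conj_inner_symm := fun f g => by
        simp only [starRingEnd_apply, star_trivial]
        congr 1
        funext y
        exact mul_comm _ _
      re_inner_nonneg := fun f => by
        simpa using integral_nonneg fun y => mul_self_nonneg ((f : X → ℝ) y)
      add_left := fun f g h => by
        have h1 : ∀ y, ((f + g : ↥V₀) : X → ℝ) y * (h : X → ℝ) y
            = (f : X → ℝ) y * (h : X → ℝ) y + (g : X → ℝ) y * (h : X → ℝ) y := by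
          intro y
          simp [add_mul]
        simp only [h1]
        exact integral_add (hIntC _ ((hcont0 f).mul (hcont0 h)))
          (hIntC _ ((hcont0 g).mul (hcont0 h)))
      smul_left := fun f g r => by
        have h1 : ∀ y, ((r • f : ↥V₀) : X → ℝ) y * (g : X → ℝ) y
            = r * ((f : X → ℝ) y * (g : X → ℝ) y) := by
          intro y
          simp [mul_assoc]
        simp only [h1, starRingEnd_apply, star_trivial]
        exact integral_const_mul _ _
      definite := fun f hf => by
        have h2 : (∫ y, ((f : X → ℝ) y) ^ 2 ∂μ) = 0 := by
          simp_rw [sq]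
          exact hf
        have h3 : ∀ x : X, (f : X → ℝ) x = 0 := by
          intro x
          have h4 := hkey _ (hV₀V f.2) x
          rw [h2, Real.sqrt_zero, mul_zero] at h4
          exact abs_eq_zero.mp (le_antisymm h4 (abs_nonneg _))
        exact Subtype.ext (funext h3) }
  letI : NormedAddCommGroup ↥V₀ := core.toNormedAddCommGroup
  letI : InnerProductSpace ℝ ↥V₀ := InnerProductSpace.ofCore core.toCore
  have hinner : ∀ f g : ↥V₀,
      (inner ℝ f g : ℝ) = ∫ y, (f : X → ℝ) y * (g : X → ℝ) y ∂μ := fun f g => rfl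
  let bb := stdOrthonormalBasis ℝ ↥V₀
  have hON := bb.orthonormal
  rw [orthonormal_iff_ite] at hON
  -- pointwise bound
  have hpt : ∀ x : X, (∑ i, ((bb i : X → ℝ) x) ^ 2) ≤ C0 ^ 2 := by
    intro x
    set t : ℝ := ∑ i, ((bb i : X → ℝ) x) ^ 2 with ht
    have ht0 : 0 ≤ t := Finset.sum_nonneg fun i _ => sq_nonneg _
    set g : ↥V₀ := ∑ i, ((bb i : X → ℝ) x) • bb i with hg
    have hgx : (g : X → ℝ) x = t := by
      rw [hg, ht]
      push_cast
      rw [Finset.sum_apply]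
      congr 1
      funext i
      simp [sq]
    have hg2 : (inner ℝ g g : ℝ) = t := by
      rw [hg]
      rw [sum_inner]
      have h1 : ∀ i (v : ↥V₀), (inner ℝ (((bb i : X → ℝ) x) • bb i) v : ℝ)
          = ((bb i : X → ℝ) x) * (inner ℝ (bb i) v : ℝ) := fun i v => real_inner_smul_left _ _ _
      simp_rw [h1, inner_sum]
      have h2 : ∀ i j, (inner ℝ (bb i) (((bb j : X → ℝ) x) • bb j) : ℝ)
          = ((bb j : X → ℝ) x) * (inner ℝ (bb i) (bb j) : ℝ) := fun i j =>
        real_inner_smul_right _ _ _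
      simp_rw [h2, hON]
      rw [ht]
      congr 1
      funext i
      rw [Finset.mul_sum]
      rw [Finset.sum_eq_single i]
      · simp [sq]
      · intro j _ hj
        simp [Ne.symm hj]
      · intro h
        exact absurd (Finset.mem_univ i) h
    have hgV : (g : X → ℝ) ∈ V := hV₀V g.2
    have h1 : t ≤ C0 * Real.sqrt t := by
      have h2 := hkey _ hgV x
      rw [hgx] at h2
      have h3 : (∫ y, ((g : X → ℝ) y) ^ 2 ∂μ) = t := by
        rw [← hg2, hinner]
        congr 1
        funext y
        exact sq ((g : X → ℝ) y) ▸ rfl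
      calc t ≤ |t| := le_abs_self t
        _ ≤ C0 * Real.sqrt (∫ y, ((g : X → ℝ) y) ^ 2 ∂μ) := h2
        _ = C0 * Real.sqrt t := by rw [h3]
    exact aux_sqrt_le ht0 (by linarith) h1
  -- integrate the pointwise bound
  have hsum : ((Module.finrank ℝ ↥V₀ : ℕ) : ℝ) ≤ C0 ^ 2 := by
    have hti : Integrable (fun x => ∑ i, ((bb i : X → ℝ) x) ^ 2) μ :=
      integrable_finset_sum _ fun i _ => hIntC _ ((hcont0 _).pow 2)
    have h1 : (∫ x, (∑ i, ((bb i : X → ℝ) x) ^ 2) ∂μ) ≤ C0 ^ 2 := by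
      calc (∫ x, (∑ i, ((bb i : X → ℝ) x) ^ 2) ∂μ) ≤ ∫ _, C0 ^ 2 ∂μ :=
            integral_mono hti (integrable_const _) hpt
        _ = C0 ^ 2 := by simp [measure_univ]
    have h2 : (∫ x, (∑ i, ((bb i : X → ℝ) x) ^ 2) ∂μ)
        = ((Module.finrank ℝ ↥V₀ : ℕ) : ℝ) := by
      rw [integral_finset_sum _ (f := fun i x => ((bb i : X → ℝ) x) ^ 2) fun i _ => hIntC _ ((hcont0 _).pow 2)]
      have h3 : ∀ i, (∫ x, ((bb i : X → ℝ) x) ^ 2 ∂μ) = 1 := by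
        intro i
        have h4 := hON i i
        simp only [if_pos rfl] at h4
        rw [hinner] at h4
        calc (∫ x, ((bb i : X → ℝ) x) ^ 2 ∂μ)
            = ∫ x, (bb i : X → ℝ) x * (bb i : X → ℝ) x ∂μ := by
              congr 1
              funext x
              exact sq ((bb i : X → ℝ) x) ▸ rfl
          _ = 1 := h4
      simp [h3]
    rw [h2] at h1
    exact h1
  rw [hrank] at hsum
  have hMgt : (C0 ^ 2 : ℝ) < (M : ℝ) := by
    rw [hM]
    exact_mod_cast Nat.lt_succ_floor _
  linarith

end FinDim
set_option maxHeartbeats 1000000 in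
/-- inequality (2.5): for `1 ≤ q < ∞` and `ε' > 0` there is a constant
`C(ε', q) > 0` such that for every `N`-dimensional subspace `X_N` of continuous functions
satisfying `ε_k(X_N^q, L_∞) ≤ B (N/k)^{1/q}` for `1 ≤ k ≤ N` (with `B ≥ 1`), one has
`H_ε(X_N^q, L_∞) ≤ C(ε', q) N (B/ε)^q` for every `ε ≥ ε'`. -/
theorem statement7 (q : ℝ) (hq : 1 ≤ q) (ε' : ℝ) (hε' : 0 < ε') :
    ∃ C : ℝ, 0 < C ∧
      ∀ (d N : ℕ) (Ω : Set (Fin d → ℝ)), IsCompact Ω →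
        ∀ (μ : Measure Ω), IsProbabilityMeasure μ →
          ∀ V : Submodule ℝ (Ω → ℝ), Module.finrank ℝ V = N →
            (∀ f ∈ V, Continuous f) →
            ∀ B : ℝ, 1 ≤ B →
              (∀ k : ℕ, 1 ≤ k → k ≤ N →
                entropyNum supDist k (unitBallLq μ q V) ≤ B * ((N : ℝ) / k) ^ (1 / q)) →
              ∀ ε : ℝ, ε' ≤ ε →
                metricEntropy supDist ε (unitBallLq μ q V) ≤ C * N * (B / ε) ^ q := by
  classical
  have hq0 : (0:ℝ) < q := lt_of_lt_of_le one_pos hq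
  have hCgood : (0:ℝ) < (2:ℝ) ^ q + 30 := by positivity
  refine ⟨(2:ℝ) ^ q + 30, hCgood, ?_⟩
  intro d N Ω hΩ μ hμ V hN hcont B hB hent ε hεε'
  have hε : (0:ℝ) < ε := lt_of_lt_of_le hε' hεε'
  have hB0 : (0:ℝ) < B := lt_of_lt_of_le one_pos hB
  have hxnn : (0:ℝ) ≤ (B / ε) ^ q := Real.rpow_nonneg (by positivity) q
  have hRHSnn : (0:ℝ) ≤ ((2:ℝ) ^ q + 30) * N * (B / ε) ^ q := by positivity
  set A := unitBallLq μ q V with hA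
  haveI hcomp : CompactSpace ↥Ω := isCompact_iff_compactSpace.mp hΩ
  haveI hne : Nonempty ↥Ω := by
    by_contra h
    rw [not_nonempty_iff] at h
    have h1 : μ Set.univ = 1 := measure_univ
    rw [Set.univ_eq_empty_iff.mpr h] at h1
    simp at h1
  -- membership facts
  have hAV : ∀ f ∈ A, f ∈ V := fun f hf => hf.1
  have hcA : ∀ f ∈ A, Continuous f := fun f hf => hcont f hf.1
  have h0A : (0 : ↥Ω → ℝ) ∈ A := ⟨V.zero_mem, by rw [LqNorm_zero μ hq0]; exact zero_le_one⟩
  have hnegA : ∀ f ∈ A, -f ∈ A := by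
    intro f hf
    refine ⟨V.neg_mem hf.1, ?_⟩
    have h1 : (-f) = (-1 : ℝ) • f := by funext x; simp
    rw [h1, LqNorm_smul μ hq0]
    simpa using hf.2
  -- trivial case: no finite covering at ε
  by_cases hcov0 : coveringNum supDist ε A = 0
  · rw [metricEntropy, hcov0]
    rw [Nat.cast_zero, Real.logb_zero]
    exact hRHSnn
  -- there is a minimal covering at ε
  have hCovSetε : {n : ℕ | ∃ T : Finset (↥Ω → ℝ), ↑T ⊆ A ∧ T.card = n ∧
      ∀ f ∈ A, ∃ g ∈ T, supDist f g ≤ ε}.Nonempty := by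
    by_contra h
    rw [Set.not_nonempty_iff_eq_empty] at h
    apply hcov0
    unfold coveringNum
    rw [h, Nat.sInf_empty]
  obtain ⟨Tε, hTεsub, hTεcard, hTεcov⟩ := Nat.sInf_mem hCovSetε
  have hTεne : Tε.Nonempty := by
    obtain ⟨g, hg, -⟩ := hTεcov 0 h0A
    exact ⟨g, hg⟩
  -- a uniform bound for A
  set Rb : ℝ := max (ε + Tε.sup' hTεne (fun g => supDist g 0)) 1 with hRb
  have hRb1 : (1:ℝ) ≤ Rb := le_max_right _ _
  have hRb0 : (0:ℝ) < Rb := lt_of_lt_of_le one_pos hRb1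
  have hAbd : ∀ f ∈ A, supDist f 0 ≤ Rb := by
    intro f hf
    obtain ⟨g, hg, hfg⟩ := hTεcov f hf
    have h1 : supDist f 0 ≤ supDist f g + supDist g 0 :=
      supDist_triangle (hcA f hf) (hcA g (hTεsub hg)) continuous_const
    have h2 : supDist g 0 ≤ Tε.sup' hTεne (fun g => supDist g 0) :=
      Finset.le_sup' (fun g => supDist g 0) hg
    have h3 : supDist f 0 ≤ ε + Tε.sup' hTεne (fun g => supDist g 0) := by linarith
    exact le_trans h3 (le_max_left _ _)
  -- pointwise norm bound on all of V
  have hVpt : ∀ f ∈ V, ∀ x, |f x| ≤ Rb * LqNorm μ q f := by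
    intro f hf x
    have hfc := hcont f hf
    rcases eq_or_lt_of_le (LqNorm_nonneg μ (q := q) f) with hL | hL
    · rw [← hL, mul_zero]
      have hall : ∀ t : ℝ, 0 < t → t * |f x| ≤ Rb := by
        intro t ht
        have htA : t • f ∈ A := by
          refine ⟨V.smul_mem _ hf, ?_⟩
          rw [LqNorm_smul μ hq0, ← hL, mul_zero]
          exact zero_le_one
        have hc2 : Continuous (t • f) := by exact continuous_const.mul hfc
        have h1 : ‖(t • f) x - (0 : ↥Ω → ℝ) x‖ ≤ supDist (t • f) 0 :=
          le_supDist hc2 continuous_const x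
        have h2 := hAbd _ htA
        simp only [Pi.smul_apply, smul_eq_mul, Pi.zero_apply, sub_zero, Real.norm_eq_abs,
          abs_mul, abs_of_pos ht] at h1
        linarith
      by_contra hpos
      push_neg at hpos
      have h3 := hall ((Rb + 1) / |f x|) (by positivity)
      rw [div_mul_cancel₀ _ (ne_of_gt hpos)] at h3
      linarith
    · have hgA : (LqNorm μ q f)⁻¹ • f ∈ A := by
        refine ⟨V.smul_mem _ hf, ?_⟩
        rw [LqNorm_smul μ hq0, abs_of_pos (inv_pos.mpr hL), inv_mul_cancel₀ hL.ne']
      have hc2 : Continuous ((LqNorm μ q f)⁻¹ • f) := by exact continuous_const.mul hfc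
      have h1 : ‖((LqNorm μ q f)⁻¹ • f) x - (0 : ↥Ω → ℝ) x‖ ≤ supDist ((LqNorm μ q f)⁻¹ • f) 0 :=
        le_supDist hc2 continuous_const x
      have h2 := hAbd _ hgA
      simp only [Pi.smul_apply, smul_eq_mul, Pi.zero_apply, sub_zero, Real.norm_eq_abs,
        abs_mul, abs_of_pos (inv_pos.mpr hL)] at h1
      have h4 : (LqNorm μ q f)⁻¹ * |f x| ≤ Rb := le_trans h1 h2
      calc |f x| = LqNorm μ q f * ((LqNorm μ q f)⁻¹ * |f x|) := by
            field_simp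
        _ ≤ LqNorm μ q f * Rb := mul_le_mul_of_nonneg_left h4 hL.le
        _ = Rb * LqNorm μ q f := mul_comm _ _
  -- dispatch the degenerate case N = 0
  rcases Nat.eq_zero_or_pos N with hN0 | hNpos
  · haveI hfdV : FiniteDimensional ℝ ↥V := findim_of_pointwise_bound μ hq V hcont hRb1 hVpt
    have hV0 : ∀ f ∈ V, f = 0 := by
      have hsub : Subsingleton ↥V := by
        rw [← Module.finrank_zero_iff (R := ℝ) (M := ↥V)]
        rw [hN, hN0]
      intro f hf
      have h1 : (⟨f, hf⟩ : ↥V) = ⟨0, V.zero_mem⟩ := Subsingleton.elim _ _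
      exact congrArg Subtype.val h1
    have hcov1 : coveringNum supDist ε A ≤ 1 := by
      have hcovset : ∀ f ∈ A, ∃ g ∈ ({0} : Finset (↥Ω → ℝ)), supDist f g ≤ ε := by
        intro f hf
        refine ⟨0, Finset.mem_singleton_self _, ?_⟩
        rw [hV0 f (hAV f hf)]
        exact supDist_le fun x => by simpa using hε.le
      have h2 := covNum_le_of_cover supDist ({0} : Finset (↥Ω → ℝ)) (by simp [h0A]) hcovset
      simpa using h2
    have hH := metricEntropy_le_logb supDist le_rfl
      (by exact_mod_cast hcov1 : (coveringNum supDist ε A : ℝ) ≤ 1)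
    rw [Real.logb_one] at hH
    rw [hN0]
    simpa using hH
  -- now N ≥ 1 : finite dimension and the bridge to bounded continuous functions
  haveI hfdV : FiniteDimensional ℝ ↥V := FiniteDimensional.of_finrank_pos (by rw [hN]; exact hNpos)
  let φ : (↥Ω → ℝ) → BoundedContinuousFunction ↥Ω ℝ := fun f =>
    if h : Continuous f then BoundedContinuousFunction.mkOfCompact ⟨f, h⟩ else 0
  have hφcoe : ∀ f : ↥Ω → ℝ, Continuous f → ⇑(φ f) = f := by
    intro f hf
    simp only [φ, dif_pos hf]
    rfl
  let W : Submodule ℝ (BoundedContinuousFunction ↥Ω ℝ) :=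
    { carrier := {F | ⇑F ∈ V}
      add_mem' := by
        intro a b ha hb
        simp only [Set.mem_setOf_eq, BoundedContinuousFunction.coe_add] at *
        exact V.add_mem ha hb
      zero_mem' := by
        simp only [Set.mem_setOf_eq, BoundedContinuousFunction.coe_zero]
        exact V.zero_mem
      smul_mem' := by
        intro c a ha
        simp only [Set.mem_setOf_eq, BoundedContinuousFunction.coe_smul] at *
        exact V.smul_mem c ha }
  let ψ : ↥W →ₗ[ℝ] ↥V :=
    { toFun := fun F => ⟨⇑(F : BoundedContinuousFunction ↥Ω ℝ), F.2⟩
      map_add' := by intro a b; apply Subtype.ext; rfl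
      map_smul' := by intro c a; apply Subtype.ext; rfl }
  have hψbij : Function.Bijective ψ := by
    constructor
    · intro a b hab
      apply Subtype.ext
      apply DFunLike.coe_injective
      exact congrArg Subtype.val hab
    · rintro ⟨f, hf⟩
      refine ⟨⟨φ f, ?_⟩, ?_⟩
      · show ⇑(φ f) ∈ V
        rw [hφcoe f (hcont f hf)]
        exact hf
      · apply Subtype.ext
        exact hφcoe f (hcont f hf)
  let ψe := LinearEquiv.ofBijective ψ hψbij
  haveI hfdW : FiniteDimensional ℝ ↥W := Module.Finite.equiv ψe.symm
  have hWrank : Module.finrank ℝ ↥W = N := by rw [ψe.finrank_eq, hN]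
  -- local nets from the volumetric bound
  have hNET : ∀ (g : ↥Ω → ℝ) (R r : ℝ), 0 < R → 0 < r →
      ∃ C₀ : Finset (↥Ω → ℝ), (∀ c ∈ C₀, Continuous c) ∧
        ((C₀.card : ℝ) ≤ (1 + 2 * R / r) ^ N) ∧
        (g ∈ V → ∀ f ∈ V, Continuous f → supDist f g ≤ R → ∃ c ∈ C₀, supDist f c ≤ r) := by
    intro g R r hR hr
    obtain ⟨T, hTcard, hTcov⟩ := exists_net ↥W hR hr
    rw [hWrank] at hTcard
    refine ⟨T.image (fun s => ⇑(φ g + ((s : ↥W) : BoundedContinuousFunction ↥Ω ℝ))), ?_, ?_, ?_⟩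
    · intro c hc
      simp only [Finset.mem_image] at hc
      obtain ⟨s, -, rfl⟩ := hc
      exact (φ g + ((s : ↥W) : BoundedContinuousFunction ↥Ω ℝ)).continuous
    · calc ((T.image _).card : ℝ) ≤ (T.card : ℝ) := by exact_mod_cast Finset.card_image_le
        _ ≤ _ := hTcard
    · intro hgV f hfV hfc hfg
      have hgc := hcont g hgV
      have hz : (φ f - φ g) ∈ W := by
        show ⇑(φ f - φ g) ∈ V
        rw [BoundedContinuousFunction.coe_sub, hφcoe f hfc, hφcoe g hgc]
        exact V.sub_mem hfV hgV
      have hznorm : (⟨φ f - φ g, hz⟩ : ↥W) ∈ Metric.closedBall 0 R := by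
        rw [Metric.mem_closedBall]
        have h1 : dist (⟨φ f - φ g, hz⟩ : ↥W) 0 = dist (φ f) (φ g) := by
          rw [Subtype.dist_eq]
          simp [dist_eq_norm]
        rw [h1, ← supDist_coe, hφcoe f hfc, hφcoe g hgc]
        exact hfg
      obtain ⟨s, hs, hdist⟩ := hTcov _ hznorm
      refine ⟨_, Finset.mem_image_of_mem _ hs, ?_⟩
      have h1 : supDist f ⇑(φ g + ((s : ↥W) : BoundedContinuousFunction ↥Ω ℝ))
          = dist (φ f) (φ g + ((s : ↥W) : BoundedContinuousFunction ↥Ω ℝ)) := by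
        conv_lhs => rw [← hφcoe f hfc]
        exact supDist_coe _ _
      rw [h1]
      have h2 : dist (φ f) (φ g + ((s : ↥W) : BoundedContinuousFunction ↥Ω ℝ))
          = dist (⟨φ f - φ g, hz⟩ : ↥W) s := by
        rw [Subtype.dist_eq]
        rw [dist_eq_norm, dist_eq_norm]
        congr 1
        rw [sub_add_eq_sub_sub]
      rw [h2]
      exact hdist
  -- recentering covers into A
  have hRecenter : ∀ (C₀ : Finset (↥Ω → ℝ)), (∀ c ∈ C₀, Continuous c) → ∀ r : ℝ,
      (∀ f ∈ A, ∃ c ∈ C₀, supDist f c ≤ r) →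
      ∃ T' : Finset (↥Ω → ℝ), ↑T' ⊆ A ∧ T'.card ≤ C₀.card ∧
        ∀ f ∈ A, ∃ g ∈ T', supDist f g ≤ 2 * r := by
    intro C₀ hC₀c r hcov
    set pick : (↥Ω → ℝ) → (↥Ω → ℝ) := fun c =>
      if h : ∃ a ∈ A, supDist a c ≤ r then h.choose else 0 with hpick
    have hpickA : ∀ c, pick c ∈ A := by
      intro c
      rw [hpick]
      dsimp only
      split_ifs with h
      · exact h.choose_spec.1
      · exact h0A
    refine ⟨C₀.image pick, ?_, Finset.card_image_le, ?_⟩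
    · intro g hg
      simp only [Finset.coe_image, Set.mem_image] at hg
      obtain ⟨c, -, rfl⟩ := hg
      exact hpickA c
    · intro f hf
      obtain ⟨c, hc, hfc⟩ := hcov f hf
      have hex : ∃ a ∈ A, supDist a c ≤ r := ⟨f, hf, hfc⟩
      refine ⟨pick c, Finset.mem_image_of_mem _ hc, ?_⟩
      have ha : pick c ∈ A ∧ supDist (pick c) c ≤ r := by
        rw [hpick]
        dsimp only
        rw [dif_pos hex]
        exact ⟨hex.choose_spec.1, hex.choose_spec.2⟩
      have h1 : supDist f (pick c) ≤ supDist f c + supDist c (pick c) :=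
        supDist_triangle (hcA f hf) (hC₀c c hc) (hcA _ ha.1)
      have h2 : supDist c (pick c) = supDist (pick c) c := supDist_comm
      rw [h2] at h1
      linarith [ha.2]
  -- covers of A at every radius
  have hCovAll : ∀ ρ : ℝ, 0 < ρ →
      {n : ℕ | ∃ T : Finset (↥Ω → ℝ), ↑T ⊆ A ∧ T.card = n ∧
        ∀ f ∈ A, ∃ g ∈ T, supDist f g ≤ ρ}.Nonempty := by
    intro ρ hρ
    obtain ⟨C₀, hC₀c, -, hC₀cov⟩ := hNET 0 Rb (ρ/2) hRb0 (by linarith)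
    have hcov : ∀ f ∈ A, ∃ c ∈ C₀, supDist f c ≤ ρ/2 := by
      intro f hf
      exact hC₀cov V.zero_mem f (hAV f hf) (hcA f hf) (hAbd f hf)
    obtain ⟨T', hT'A, -, hT'cov⟩ := hRecenter C₀ hC₀c (ρ/2) hcov
    refine ⟨T'.card, T', hT'A, rfl, ?_⟩
    intro f hf
    obtain ⟨g, hg, h⟩ := hT'cov f hf
    exact ⟨g, hg, by linarith⟩
  have hcovPos : ∀ ρ : ℝ, 0 < ρ → 1 ≤ coveringNum supDist ρ A := by
    intro ρ hρ
    obtain ⟨T, hTsub, hTcard0, hTcov⟩ := Nat.sInf_mem (hCovAll ρ hρ)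
    have hTcard : T.card = coveringNum supDist ρ A := hTcard0
    by_contra h
    push_neg at h
    have h0 : coveringNum supDist ρ A = 0 := by omega
    rw [h0, Finset.card_eq_zero] at hTcard
    obtain ⟨g, hg, -⟩ := hTcov 0 h0A
    rw [hTcard] at hg
    simp at hg
  -- nonemptiness of entropy-number sets
  have hSne : ∀ k : ℕ, {ρ : ℝ | 0 < ρ ∧ metricEntropy supDist ρ A ≤ k}.Nonempty := by
    intro k
    refine ⟨Rb + 1, by linarith, ?_⟩
    have hc1 : coveringNum supDist (Rb+1) A ≤ 1 := by
      have hcovset : ∀ f ∈ A, ∃ g ∈ ({0} : Finset (↥Ω → ℝ)), supDist f g ≤ Rb + 1 := by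
        intro f hf
        refine ⟨0, Finset.mem_singleton_self _, ?_⟩
        have := hAbd f hf
        linarith
      have h2 := covNum_le_of_cover supDist ({0} : Finset (↥Ω → ℝ)) (by simp [h0A]) hcovset
      simpa using h2
    have h3 := metricEntropy_le_logb supDist le_rfl
      (by exact_mod_cast hc1 : (coveringNum supDist (Rb+1) A : ℝ) ≤ 1)
    rw [Real.logb_one] at h3
    exact le_trans h3 (by positivity)
  -- extraction of covers from the entropy-number hypothesis
  have hExtract : ∀ k : ℕ, 1 ≤ k → k ≤ N → ∀ ρt : ℝ,
      B * ((N:ℝ)/(k:ℝ)) ^ (1/q) < ρt →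
      ∃ T : Finset (↥Ω → ℝ), ↑T ⊆ A ∧ ((T.card:ℝ)) ≤ (2:ℝ) ^ (k:ℝ) ∧
        (∀ f ∈ A, ∃ g ∈ T, supDist f g ≤ ρt) := by
    intro k hk1 hkN ρt hρt
    have hEk := hent k hk1 hkN
    have hlt : sInf {ρ : ℝ | 0 < ρ ∧ metricEntropy supDist ρ A ≤ k} < ρt := by
      calc sInf {ρ : ℝ | 0 < ρ ∧ metricEntropy supDist ρ A ≤ k}
          = entropyNum supDist k A := rfl
        _ ≤ B * ((N:ℝ)/(k:ℝ)) ^ (1/q) := hEk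
        _ < ρt := hρt
    obtain ⟨ρ, hρmem, hρlt⟩ := (csInf_lt_iff ⟨0, fun y hy => hy.1.le⟩ (hSne k)).mp hlt
    obtain ⟨hρ0, hρH⟩ := hρmem
    have hpos := hcovPos ρ hρ0
    have hcovk : (coveringNum supDist ρ A : ℝ) ≤ (2:ℝ) ^ (k:ℝ) := by
      have h1 : (0:ℝ) < (coveringNum supDist ρ A : ℝ) := by exact_mod_cast hpos
      exact (Real.logb_le_iff_le_rpow one_lt_two h1).mp hρH
    obtain ⟨T, hTsub, hTcard0, hTcov⟩ := Nat.sInf_mem (hCovAll ρ hρ0)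
    have hTcard : T.card = coveringNum supDist ρ A := hTcard0
    refine ⟨T, hTsub, ?_, fun f hf => ?_⟩
    · rw [hTcard]
      exact hcovk
    · obtain ⟨g, hg, hfg⟩ := hTcov f hf
      exact ⟨g, hg, le_trans hfg hρlt.le⟩
  -- the three regimes
  set x : ℝ := B / ε with hx
  have hx0 : (0:ℝ) < x := by positivity
  rcases le_or_gt ε B with hεB | hBε
  · -- Regime ε ≤ B : volumetric covering
    have hx1 : (1:ℝ) ≤ x := (one_le_div hε).mpr hεB
    have h2B : B * ((N:ℝ)/(N:ℝ)) ^ (1/q) < 2*B := by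
      rw [div_self (by exact_mod_cast hNpos.ne' : (N:ℝ) ≠ 0), Real.one_rpow, mul_one]
      linarith
    obtain ⟨T₀, hT₀sub, hT₀card, hT₀cov⟩ := hExtract N hNpos le_rfl (2*B) h2B
    choose Cf hCf1 hCf2 hCf3 using fun g => hNET g (2*B) (ε/4) (by positivity) (by positivity)
    set C₀ := T₀.biUnion Cf with hC₀
    have hC₀cont : ∀ c ∈ C₀, Continuous c := by
      intro c hc
      rw [hC₀, Finset.mem_biUnion] at hc
      obtain ⟨g, hgT, hcg⟩ := hc
      exact hCf1 g c hcg
    have hfact : (1 + 2*(2*B)/(ε/4)) = 1 + 16*B/ε := by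
      field_simp
      ring
    have hC₀card : (C₀.card : ℝ) ≤ (2:ℝ)^((N:ℕ):ℝ) * (1 + 16*B/ε)^N := by
      calc (C₀.card : ℝ) ≤ ((∑ g ∈ T₀, (Cf g).card : ℕ) : ℝ) := by
            exact_mod_cast Finset.card_biUnion_le
        _ = ∑ g ∈ T₀, ((Cf g).card : ℝ) := by push_cast; rfl
        _ ≤ ∑ g ∈ T₀, (1 + 2*(2*B)/(ε/4))^N := Finset.sum_le_sum fun g _ => hCf2 g
        _ = (T₀.card : ℝ) * (1 + 2*(2*B)/(ε/4))^N := by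
            rw [Finset.sum_const, nsmul_eq_mul]
        _ ≤ (2:ℝ)^((N:ℕ):ℝ) * (1 + 16*B/ε)^N := by
            rw [hfact]
            exact mul_le_mul_of_nonneg_right hT₀card (by positivity)
    have hcovA : ∀ f ∈ A, ∃ c ∈ C₀, supDist f c ≤ ε/4 := by
      intro f hf
      obtain ⟨g, hgT, hfg⟩ := hT₀cov f hf
      obtain ⟨c, hc, hfc⟩ := hCf3 g (hAV g (hT₀sub hgT)) f (hAV f hf) (hcA f hf) hfg
      exact ⟨c, Finset.mem_biUnion.mpr ⟨g, hgT, hc⟩, hfc⟩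
    obtain ⟨T', hT'A, hT'card, hT'cov⟩ := hRecenter C₀ hC₀cont (ε/4) hcovA
    have hcovε : coveringNum supDist ε A ≤ T'.card := by
      apply covNum_le_of_cover supDist T' hT'A
      intro f hf
      obtain ⟨g, hg, hfg⟩ := hT'cov f hf
      exact ⟨g, hg, by linarith⟩
    set Y : ℝ := (2:ℝ)^((N:ℕ):ℝ) * (1 + 16*B/ε)^N with hY
    have hbase1 : (1:ℝ) ≤ 1 + 16*B/ε := by
      have : (0:ℝ) ≤ 16*B/ε := by positivity
      linarith
    have hY1 : (1:ℝ) ≤ Y := by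
      have h1 : (1:ℝ) ≤ (2:ℝ)^((N:ℕ):ℝ) := Real.one_le_rpow one_le_two (by positivity)
      have h2 : (1:ℝ) ≤ (1 + 16*B/ε)^N := one_le_pow₀ hbase1
      have h3 := mul_le_mul h1 h2 zero_le_one (le_trans zero_le_one h1)
      rw [hY]
      linarith [h3]
    have hHY : metricEntropy supDist ε A ≤ Real.logb 2 Y := by
      apply metricEntropy_le_logb supDist hY1
      calc (coveringNum supDist ε A : ℝ) ≤ (T'.card : ℝ) := by exact_mod_cast hcovε
        _ ≤ (C₀.card : ℝ) := by exact_mod_cast hT'card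
        _ ≤ Y := hC₀card
    have hlogY : Real.logb 2 Y ≤ (N:ℝ) + (N:ℝ) * Real.logb 2 (17 * x) := by
      rw [hY, Real.logb_mul (by positivity) (by positivity),
        Real.logb_rpow (by norm_num : (0:ℝ) < 2) (by norm_num), Real.logb_pow]
      have h17 : 1 + 16*B/ε ≤ 17 * x := by
        have h18 : 16*B/ε = 16*x := by rw [hx]; ring
        rw [h18]
        linarith
      have hlog2 : Real.logb 2 (1 + 16*B/ε) ≤ Real.logb 2 (17*x) :=
        Real.logb_le_logb_of_le one_lt_two (by positivity) h17
      have hNnn : (0:ℝ) ≤ (N:ℝ) := Nat.cast_nonneg N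
      have h5 := mul_le_mul_of_nonneg_left hlog2 hNnn
      linarith
    have hlog17 : Real.logb 2 (17 * x) ≤ 25 * x := by
      rw [Real.logb, div_le_iff₀ (Real.log_pos one_lt_two)]
      have h1 : Real.log (17 * x) ≤ 17 * x :=
        le_trans (Real.log_le_sub_one_of_pos (by positivity)) (by linarith)
      have h2 : (17:ℝ) ≤ 25 * Real.log 2 := by nlinarith [Real.log_two_gt_d9]
      nlinarith [mul_le_mul_of_nonneg_left h2 hx0.le]
    have hxq : x ≤ x ^ q := by
      calc x = x ^ (1:ℝ) := (Real.rpow_one x).symm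
        _ ≤ x ^ q := Real.rpow_le_rpow_of_exponent_le hx1 hq
    have hxq1 : (1:ℝ) ≤ x ^ q := Real.one_le_rpow hx1 hq0.le
    have hNnn : (0:ℝ) ≤ (N:ℝ) := Nat.cast_nonneg N
    have h2qnn : (0:ℝ) ≤ (2:ℝ)^q := by positivity
    have e1 : (N:ℝ) ≤ (N:ℝ) * x ^ q := le_mul_of_one_le_right hNnn hxq1
    have e2 : (N:ℝ) * (25 * x) ≤ 25 * ((N:ℝ) * x ^ q) := by nlinarith [mul_le_mul_of_nonneg_left hxq hNnn]
    have e2' : (N:ℝ) * Real.logb 2 (17 * x) ≤ (N:ℝ) * (25 * x) :=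
      mul_le_mul_of_nonneg_left hlog17 hNnn
    have e3 : (26:ℝ) * ((N:ℝ) * x ^ q) ≤ ((2:ℝ)^q + 30) * ((N:ℝ) * x ^ q) :=
      mul_le_mul_of_nonneg_right (by linarith) (by positivity)
    have e4 : ((2:ℝ)^q + 30) * (N:ℝ) * x ^ q = ((2:ℝ)^q + 30) * ((N:ℝ) * x ^ q) := by ring
    calc metricEntropy supDist ε A ≤ Real.logb 2 Y := hHY
      _ ≤ ((2:ℝ)^q + 30) * (N:ℝ) * x ^ q := by linarith
  · rcases le_or_gt ε (2 * (B * (N:ℝ) ^ (1/q))) with hεsmall | hεbig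
    · -- middle regime B < ε ≤ 2 B N^{1/q}
      set k : ℕ := Nat.floor ((N:ℝ) * x^q) + 1 with hk
      have hk1 : 1 ≤ k := Nat.le_add_left 1 _
      have hNpos' : (0:ℝ) < (N:ℝ) := by exact_mod_cast hNpos
      have hxlt : x < 1 := by
        rw [hx]
        exact (div_lt_one hε).mpr hBε
      have hxqlt : x ^ q < 1 := Real.rpow_lt_one hx0.le hxlt hq0
      have hkN : k ≤ N := by
        have h1 : (N:ℝ) * x^q < N := by nlinarith
        have hfl : Nat.floor ((N:ℝ) * x^q) < N := by
          rw [Nat.floor_lt (by positivity)]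
          exact h1
        omega
      have hk0 : (0:ℝ) < (k:ℝ) := by exact_mod_cast hk1
      have hkgt : (N:ℝ) * x^q < (k:ℝ) := by
        rw [hk]
        push_cast
        exact Nat.lt_floor_add_one _
      have hbound : B * ((N:ℝ)/(k:ℝ)) ^ (1/q) < ε := by
        have hinv : (B/ε) * (ε/B) = 1 := by field_simp
        have h1 : (N:ℝ)/(k:ℝ) < (ε/B)^q := by
          rw [div_lt_iff₀ hk0]
          calc (N:ℝ) = ((N:ℝ) * x^q) * (ε/B)^q := by
                rw [mul_assoc, ← Real.mul_rpow (by positivity) (by positivity), hx, hinv,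
                  Real.one_rpow, mul_one]
            _ < (k:ℝ) * (ε/B)^q := mul_lt_mul_of_pos_right hkgt (by positivity)
            _ = (ε/B)^q * k := mul_comm _ _
        have h2 : ((N:ℝ)/(k:ℝ)) ^ (1/q) < ε/B := by
          have h3 := Real.rpow_lt_rpow (by positivity) h1 (by positivity : (0:ℝ) < 1/q)
          rwa [← Real.rpow_mul (by positivity : (0:ℝ) ≤ ε/B), mul_one_div_cancel hq0.ne',
            Real.rpow_one] at h3
        calc B * ((N:ℝ)/(k:ℝ)) ^ (1/q) < B * (ε/B) := mul_lt_mul_of_pos_left h2 hB0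
          _ = ε := by field_simp
      obtain ⟨T, hTsub, hTcard, hTcov⟩ := hExtract k hk1 hkN ε hbound
      have hH : metricEntropy supDist ε A ≤ (k:ℝ) := by
        have hcc : (coveringNum supDist ε A : ℝ) ≤ (T.card : ℝ) := by
          exact_mod_cast covNum_le_of_cover supDist T hTsub hTcov
        have hcb : (coveringNum supDist ε A : ℝ) ≤ (2:ℝ)^((k:ℕ):ℝ) := le_trans hcc hTcard
        have h1 := metricEntropy_le_logb supDist
          (Real.one_le_rpow one_le_two (by positivity) : (1:ℝ) ≤ (2:ℝ)^((k:ℕ):ℝ)) hcb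
        rwa [Real.logb_rpow (by norm_num : (0:ℝ) < 2) (by norm_num)] at h1
      -- k ≤ (1 + 2^q) N x^q
      have h2q : (1:ℝ) ≤ (2:ℝ)^q * ((N:ℝ) * x ^ q) := by
        have h1 : ε ^ q ≤ ((2*B) * (N:ℝ)^(1/q)) ^ q := by
          apply Real.rpow_le_rpow hε.le ?_ hq0.le
          calc ε ≤ 2 * (B * (N:ℝ)^(1/q)) := hεsmall
            _ = (2*B) * (N:ℝ)^(1/q) := by ring
        rw [Real.mul_rpow (by positivity) (by positivity),
          Real.mul_rpow (by norm_num) hB0.le,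
          ← Real.rpow_mul (Nat.cast_nonneg N), one_div_mul_cancel hq0.ne',
          Real.rpow_one] at h1
        -- h1 : ε^q ≤ 2^q * B^q * N
        have hεq : (0:ℝ) < ε ^ q := Real.rpow_pos_of_pos hε q
        have hxq_eq : x ^ q = B ^ q / ε ^ q := by
          rw [hx, Real.div_rpow hB0.le hε.le]
        rw [hxq_eq]
        rw [show (2:ℝ)^q * ((N:ℝ) * (B^q/ε^q)) = ((2:ℝ)^q * B^q * N)/ε^q by ring]
        rw [le_div_iff₀ hεq, one_mul]
        exact h1
      have hflr : (Nat.floor ((N:ℝ) * x^q) : ℝ) ≤ (N:ℝ) * x^q := Nat.floor_le (by positivity)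
      have hkle : (k:ℝ) ≤ (1 + (2:ℝ)^q) * ((N:ℝ) * x ^ q) := by
        have h1 : (k:ℝ) = (Nat.floor ((N:ℝ) * x^q) : ℝ) + 1 := by
          rw [hk]
          push_cast
          rfl
        have h2 : (1 + (2:ℝ)^q) * ((N:ℝ) * x ^ q)
            = (N:ℝ) * x ^ q + (2:ℝ)^q * ((N:ℝ) * x ^ q) := by ring
        linarith
      have hNxq : (0:ℝ) ≤ (N:ℝ) * x ^ q := by positivity
      have e3 : (1 + (2:ℝ)^q) * ((N:ℝ) * x ^ q) ≤ ((2:ℝ)^q + 30) * ((N:ℝ) * x ^ q) :=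
        mul_le_mul_of_nonneg_right (by linarith) hNxq
      have e4 : ((2:ℝ)^q + 30) * (N:ℝ) * x ^ q = ((2:ℝ)^q + 30) * ((N:ℝ) * x ^ q) := by ring
      calc metricEntropy supDist ε A ≤ (k:ℝ) := hH
        _ ≤ ((2:ℝ)^q + 30) * (N:ℝ) * x ^ q := by linarith
    · -- large regime ε > 2 B N^{1/q} : a single ball suffices
      have hbound : B * ((N:ℝ)/((1:ℕ):ℝ)) ^ (1/q) < ε/2 := by
        rw [Nat.cast_one, div_one]
        linarith
      obtain ⟨T, hTsub, hTcard, hTcov⟩ := hExtract 1 le_rfl hNpos (ε/2) hbound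
      have hTcard2 : T.card ≤ 2 := by
        have h1 : ((T.card:ℝ)) ≤ (2:ℝ)^((1:ℕ):ℝ) := hTcard
        rw [Nat.cast_one, Real.rpow_one] at h1
        exact_mod_cast h1
      have hsym : ∀ f ∈ A, supDist f 0 ≤ ε := by
        intro f hf
        obtain ⟨a, ha, hfa⟩ := hTcov f hf
        obtain ⟨b, hb, hfb⟩ := hTcov (-f) (hnegA f hf)
        obtain ⟨c, hc, hfc⟩ := hTcov 0 h0A
        have hfcont := hcA f hf
        have hacont := hcA a (hTsub ha)
        have hbcont := hcA b (hTsub hb)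
        have hccont := hcA c (hTsub hc)
        have htwo : a = b ∨ a = c ∨ b = c := by
          by_contra hcon
          push_neg at hcon
          obtain ⟨h1, h2, h3⟩ := hcon
          have hcard : ({a, b, c} : Finset (↥Ω → ℝ)).card = 3 := by
            rw [Finset.card_insert_of_notMem (by simp [h1, h2]),
              Finset.card_insert_of_notMem (by simp [h3]), Finset.card_singleton]
          have hsub3 : ({a, b, c} : Finset (↥Ω → ℝ)) ⊆ T := by
            intro z hz
            simp only [Finset.mem_insert, Finset.mem_singleton] at hz
            rcases hz with rfl | rfl | rfl <;> assumption
          have h4 := Finset.card_le_card hsub3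
          omega
        apply supDist_le
        intro y
        simp only [Pi.zero_apply, sub_zero]
        have hpa : ‖f y - a y‖ ≤ ε/2 := le_trans (le_supDist hfcont hacont y) hfa
        have hpb : ‖(-f) y - b y‖ ≤ ε/2 := le_trans (le_supDist hfcont.neg hbcont y) hfb
        have hpc : ‖(0:↥Ω→ℝ) y - c y‖ ≤ ε/2 := le_trans (le_supDist continuous_const hccont y) hfc
        simp only [Pi.neg_apply, Pi.zero_apply, zero_sub, Real.norm_eq_abs] at hpa hpb hpc ⊢
        obtain ⟨hpa1, hpa2⟩ := abs_le.mp hpa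
        obtain ⟨hpb1, hpb2⟩ := abs_le.mp hpb
        obtain ⟨hpc1, hpc2⟩ := abs_le.mp hpc
        rcases htwo with h | h | h
        · have hay := congrFun h y
          rw [abs_le]
          constructor <;> nlinarith [hay]
        · have hay := congrFun h y
          rw [abs_le]
          constructor <;> nlinarith [hay]
        · have hay := congrFun h y
          rw [abs_le]
          constructor <;> nlinarith [hay]
      have hcov1 : coveringNum supDist ε A ≤ 1 := by
        have hcovset : ∀ f ∈ A, ∃ g ∈ ({0} : Finset (↥Ω → ℝ)), supDist f g ≤ ε := by
          intro f hf
          exact ⟨0, Finset.mem_singleton_self _, hsym f hf⟩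
        have h2 := covNum_le_of_cover supDist ({0} : Finset (↥Ω → ℝ)) (by simp [h0A]) hcovset
        simpa using h2
      have hH := metricEntropy_le_logb supDist le_rfl
        (by exact_mod_cast hcov1 : (coveringNum supDist ε A : ℝ) ≤ 1)
      rw [Real.logb_one] at hH
      exact le_trans hH hRHSnn
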